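/- Suppose ‖e^{At}‖ ≤ β e^{-αt} for all t ≥ 0 with α, β > 0, and let K be a matrix with ‖K‖ < √(2α)/β. Define the linear map L on n×n matrices by L(X) = ∫₀^∞ e^{At} K X Kᵀ e^{Aᵀt} dt. Then the operator norm of L is strictly less than 1, and consequently the series Σ_{k≥0} L^k(P^{(1)}) converges for any matrix P^{(1)}. -/

import Mathlib

set_option maxHeartbeats 1000000


open MeasureTheory Matrix
open scoped Matrix.Norms.L2Operator

/-- If `‖e^{At}‖ ≤ β e^{-αt}` for `t ≥ 0` and `‖K‖ < √(2α)/β`, then the linear map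
`L(X) = ∫₀^∞ e^{At} K X Kᵀ e^{Aᵀt} dt` on `n × n` matrices is a contraction (its operator
norm is strictly less than one), and consequently the series `Σ_{k≥0} L^k(P⁽¹⁾)`
converges for any matrix `P⁽¹⁾`. -/
theorem switched_gramian_map_contraction {n : ℕ}
    (A K : Matrix (Fin n) (Fin n) ℝ) (α β : ℝ) (hα : 0 < α) (hβ : 0 < β)
    (hbound : ∀ t : ℝ, 0 ≤ t →
      ‖NormedSpace.exp (t • A)‖ ≤ β * Real.exp (-α * t))
    (hK : ‖K‖ < Real.sqrt (2 * α) / β)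
    (L : Matrix (Fin n) (Fin n) ℝ → Matrix (Fin n) (Fin n) ℝ)
    (hL : ∀ X, L X = ∫ t in Set.Ioi (0:ℝ),
        NormedSpace.exp (t • A) * K * X * Kᵀ * NormedSpace.exp (t • Aᵀ)) :
    (∃ c : ℝ, 0 ≤ c ∧ c < 1 ∧ ∀ X, ‖L X‖ ≤ c * ‖X‖) ∧
    ∀ P₁ : Matrix (Fin n) (Fin n) ℝ, Summable (fun k : ℕ => L^[k] P₁) := by
  have h2α : (0:ℝ) < 2 * α := by linarith
  set c : ℝ := β ^ 2 * ‖K‖ ^ 2 * (2 * α)⁻¹ with hc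
  have hK0 : 0 ≤ ‖K‖ := norm_nonneg _
  have hc0 : 0 ≤ c := by positivity
  have hc1 : c < 1 := by
    have h1 : ‖K‖ * β < Real.sqrt (2 * α) := (lt_div_iff₀ hβ).mp hK
    have h2 : (‖K‖ * β) ^ 2 < Real.sqrt (2 * α) ^ 2 := by
      apply sq_lt_sq' _ h1
      nlinarith [Real.sqrt_nonneg (2 * α)]
    rw [Real.sq_sqrt h2α.le] at h2
    rw [hc, mul_inv_lt_iff₀ h2α]
    nlinarith
  have key : ∀ X, ‖L X‖ ≤ c * ‖X‖ := by
    intro X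
    rw [hL]
    have hpt : ∀ t ∈ Set.Ioi (0:ℝ),
        ‖NormedSpace.exp (t • A) * K * X * Kᵀ * NormedSpace.exp (t • Aᵀ)‖
          ≤ (β ^ 2 * ‖K‖ ^ 2 * ‖X‖) * Real.exp (-(2 * α) * t) := by
      intro t ht
      have ht0 : (0:ℝ) ≤ t := le_of_lt ht
      have hE := hbound t ht0
      have hET : ‖NormedSpace.exp (t • Aᵀ)‖ ≤ β * Real.exp (-α * t) := by
        have : NormedSpace.exp (t • Aᵀ) = (NormedSpace.exp (t • A))ᵀ := by
          rw [← Matrix.transpose_smul, Matrix.exp_transpose]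
        rw [this, ← Matrix.conjTranspose_eq_transpose_of_trivial,
          Matrix.l2_opNorm_conjTranspose]
        exact hE
      have hKT : ‖Kᵀ‖ = ‖K‖ := by
        rw [← Matrix.conjTranspose_eq_transpose_of_trivial, Matrix.l2_opNorm_conjTranspose]
      have hmul : ‖NormedSpace.exp (t • A) * K * X * Kᵀ * NormedSpace.exp (t • Aᵀ)‖
          ≤ ‖NormedSpace.exp (t • A)‖ * ‖K‖ * ‖X‖ * ‖Kᵀ‖ * ‖NormedSpace.exp (t • Aᵀ)‖ := by
        calc ‖NormedSpace.exp (t • A) * K * X * Kᵀ * NormedSpace.exp (t • Aᵀ)‖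
            ≤ ‖NormedSpace.exp (t • A) * K * X * Kᵀ‖ * ‖NormedSpace.exp (t • Aᵀ)‖ :=
              Matrix.l2_opNorm_mul _ _
          _ ≤ ‖NormedSpace.exp (t • A) * K * X‖ * ‖Kᵀ‖ * ‖NormedSpace.exp (t • Aᵀ)‖ := by
              gcongr <;> exact Matrix.l2_opNorm_mul _ _
          _ ≤ ‖NormedSpace.exp (t • A) * K‖ * ‖X‖ * ‖Kᵀ‖ * ‖NormedSpace.exp (t • Aᵀ)‖ := by
              gcongr ?_ * _ * _ <;> exact Matrix.l2_opNorm_mul _ _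
          _ ≤ ‖NormedSpace.exp (t • A)‖ * ‖K‖ * ‖X‖ * ‖Kᵀ‖ * ‖NormedSpace.exp (t • Aᵀ)‖ := by
              gcongr ?_ * _ * _ * _ <;> exact Matrix.l2_opNorm_mul _ _
      have hexp : Real.exp (-α * t) * Real.exp (-α * t) = Real.exp (-(2 * α) * t) := by
        rw [← Real.exp_add]; ring_nf
      calc ‖NormedSpace.exp (t • A) * K * X * Kᵀ * NormedSpace.exp (t • Aᵀ)‖
          ≤ ‖NormedSpace.exp (t • A)‖ * ‖K‖ * ‖X‖ * ‖Kᵀ‖ * ‖NormedSpace.exp (t • Aᵀ)‖ := hmul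
        _ ≤ (β * Real.exp (-α * t)) * ‖K‖ * ‖X‖ * ‖K‖ * (β * Real.exp (-α * t)) := by
            rw [hKT]
            have h1 : (0:ℝ) ≤ β * Real.exp (-α * t) := by positivity
            gcongr
        _ = (β ^ 2 * ‖K‖ ^ 2 * ‖X‖) * (Real.exp (-α * t) * Real.exp (-α * t)) := by ring
        _ = (β ^ 2 * ‖K‖ ^ 2 * ‖X‖) * Real.exp (-(2 * α) * t) := by rw [hexp]
    have hg : IntegrableOn (fun t : ℝ => (β ^ 2 * ‖K‖ ^ 2 * ‖X‖) * Real.exp (-(2 * α) * t))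
        (Set.Ioi (0:ℝ)) := (exp_neg_integrableOn_Ioi 0 h2α).const_mul _
    have hval : (∫ t in Set.Ioi (0:ℝ), (β ^ 2 * ‖K‖ ^ 2 * ‖X‖) * Real.exp (-(2 * α) * t))
        = c * ‖X‖ := by
      rw [MeasureTheory.integral_const_mul]
      have : (∫ t in Set.Ioi (0:ℝ), Real.exp (-(2 * α) * t)) = (2 * α)⁻¹ := by
        have := integral_comp_mul_left_Ioi (fun u => Real.exp (-u)) 0 h2α
        simp only [mul_zero, smul_eq_mul, neg_mul] at this ⊢
        rw [this, integral_exp_neg_Ioi_zero, mul_one]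
      rw [this, hc]; ring
    calc ‖∫ t in Set.Ioi (0:ℝ),
          NormedSpace.exp (t • A) * K * X * Kᵀ * NormedSpace.exp (t • Aᵀ)‖
        ≤ ∫ t in Set.Ioi (0:ℝ),
            ‖NormedSpace.exp (t • A) * K * X * Kᵀ * NormedSpace.exp (t • Aᵀ)‖ :=
          norm_integral_le_integral_norm _
      _ ≤ ∫ t in Set.Ioi (0:ℝ), (β ^ 2 * ‖K‖ ^ 2 * ‖X‖) * Real.exp (-(2 * α) * t) := by
          refine integral_mono_of_nonneg ?_ hg ?_
          · exact Filter.Eventually.of_forall fun t => norm_nonneg _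
          · exact (ae_restrict_iff' measurableSet_Ioi).mpr
              (Filter.Eventually.of_forall hpt)
      _ = c * ‖X‖ := hval
  refine ⟨⟨c, hc0, hc1, key⟩, fun P₁ => ?_⟩
  have hiter : ∀ k : ℕ, ‖L^[k] P₁‖ ≤ c ^ k * ‖P₁‖ := by
    intro k
    induction k with
    | zero => simp
    | succ k ih =>
      rw [Function.iterate_succ_apply']
      calc ‖L (L^[k] P₁)‖ ≤ c * ‖L^[k] P₁‖ := key _
        _ ≤ c * (c ^ k * ‖P₁‖) := by gcongr
        _ = c ^ (k + 1) * ‖P₁‖ := by ring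
  exact Summable.of_norm_bounded ((summable_geometric_of_lt_one hc0 hc1).mul_right ‖P₁‖) hiter
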